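/- Assume h₁, h₂, h₃ are pairwise distinct and u₁₂ = u₁₃ = 1, and let L, M be as defined. Then u₃₁ = ((h₁−h₃)/(h₃−h₂))·(L+h₂M)(L+h₃M) + (M/((h₁−h₂)(h₃−h₂)))·(r₊(h₁−h₂−h₃) − q₊h₁h₂h₃ + t·h₂h₃) + (L/((h₁−h₂)(h₃−h₂)))·(q₊(h₂h₃−h₁h₂−h₁h₃) − r₊ + t·h₁) + (r₋ − q₋h₃)/(h₃−h₂) + (q₊h₃² − t·h₃ + r₊)(q₊h₁² − t·h₁ + r₊)/((h₁−h₃)²(h₂−h₁)(h₃−h₂)); that is, the entry u₃₁ of B is recovered from the spectral coefficients and the distinguished point (L : M : 1). -/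

import Mathlib

open Matrix
set_option maxHeartbeats 8000000

/-- recovery of u₃₁ from the spectral coefficients and the
distinguished point, when u₁₂ = u₁₃ = 1 and h₁, h₂, h₃ are pairwise distinct. -/
theorem entry_u31_from_spectral_data
    (h₁ h₂ h₃ : ℂ) (B : Matrix (Fin 3) (Fin 3) ℂ)
    (h12 : h₁ ≠ h₂) (h13 : h₁ ≠ h₃) (h23 : h₂ ≠ h₃)
    (hu12 : B 0 1 = 1) (hu13 : B 0 2 = 1)
    (qP qMi rP rMi t : ℂ)
    (hqP : qP = B 0 0 + B 1 1 + B 2 2)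
    (hqMi : qMi = (B 0 0 * B 1 1 - B 0 1 * B 1 0) + (B 0 0 * B 2 2 - B 0 2 * B 2 0)
        + (B 1 1 * B 2 2 - B 1 2 * B 2 1))
    (hrP : rP = h₁ * h₂ * B 2 2 + h₁ * h₃ * B 1 1 + h₂ * h₃ * B 0 0)
    (hrMi : rMi = h₃ * (B 0 0 * B 1 1 - B 0 1 * B 1 0) + h₂ * (B 0 0 * B 2 2 - B 0 2 * B 2 0)
        + h₁ * (B 1 1 * B 2 2 - B 1 2 * B 2 1))
    (ht : t = (h₁ + h₂) * B 2 2 + (h₁ + h₃) * B 1 1 + (h₂ + h₃) * B 0 0)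
    (L M : ℂ)
    (hL : L = (B 0 1 * h₃ * (B 0 1 * B 1 2 - B 0 2 * B 1 1)
        + B 0 2 * h₂ * (B 0 1 * B 2 2 - B 0 2 * B 2 1))
        / (B 0 1 * B 0 2 * (h₃ - h₂)))
    (hM : M = -(B 0 1 * (B 0 1 * B 1 2 - B 0 2 * B 1 1)
        + B 0 2 * (B 0 1 * B 2 2 - B 0 2 * B 2 1))
        / (B 0 1 * B 0 2 * (h₃ - h₂))) :
    B 2 0 = (h₁ - h₃) / (h₃ - h₂) * ((L + h₂ * M) * (L + h₃ * M))
      + M / ((h₁ - h₂) * (h₃ - h₂))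
          * (rP * (h₁ - h₂ - h₃) - qP * h₁ * h₂ * h₃ + t * h₂ * h₃)
      + L / ((h₁ - h₂) * (h₃ - h₂))
          * (qP * (h₂ * h₃ - h₁ * h₂ - h₁ * h₃) - rP + t * h₁)
      + (rMi - qMi * h₃) / (h₃ - h₂)
      + (qP * h₃ ^ 2 - t * h₃ + rP) * (qP * h₁ ^ 2 - t * h₁ + rP)
          / ((h₁ - h₃) ^ 2 * (h₂ - h₁) * (h₃ - h₂)) := by
  have d12 : h₁ - h₂ ≠ 0 := sub_ne_zero.mpr h12
  have d13 : h₁ - h₃ ≠ 0 := sub_ne_zero.mpr h13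
  have d23 : h₃ - h₂ ≠ 0 := sub_ne_zero.mpr (Ne.symm h23)
  have d21 : h₂ - h₁ ≠ 0 := sub_ne_zero.mpr (Ne.symm h12)
  have hD0 : ((h₃ - h₂) ^ 3 * (h₁ - h₂) ^ 2 * (h₁ - h₃) ^ 2) ≠ 0 :=
    mul_ne_zero (mul_ne_zero (pow_ne_zero _ d23) (pow_ne_zero _ d12)) (pow_ne_zero _ d13)
  have hL2 : L = (h₃ * (B 1 2 - B 1 1) + h₂ * (B 2 2 - B 2 1)) / (h₃ - h₂) := by
    rw [hL, hu12, hu13]; congr 1 <;> ring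
  have hM2 : M = -((B 1 2 - B 1 1) + (B 2 2 - B 2 1)) / (h₃ - h₂) := by
    rw [hM, hu12, hu13]
    rw [div_eq_div_iff (by simpa using d23) d23]; ring
  rw [hL2, hM2]
  have e1 : (h₁ - h₃) / (h₃ - h₂) * (((h₃ * (B 1 2 - B 1 1) + h₂ * (B 2 2 - B 2 1)) / (h₃ - h₂) + h₂ * (-((B 1 2 - B 1 1) + (B 2 2 - B 2 1)) / (h₃ - h₂))) * ((h₃ * (B 1 2 - B 1 1) + h₂ * (B 2 2 - B 2 1)) / (h₃ - h₂) + h₃ * (-((B 1 2 - B 1 1) + (B 2 2 - B 2 1)) / (h₃ - h₂)))) = ((h₁ - h₃) * ((h₃ * (B 1 2 - B 1 1) + h₂ * (B 2 2 - B 2 1)) - h₂ * ((B 1 2 - B 1 1) + (B 2 2 - B 2 1))) * ((h₃ * (B 1 2 - B 1 1) + h₂ * (B 2 2 - B 2 1)) - h₃ * ((B 1 2 - B 1 1) + (B 2 2 - B 2 1))) * (h₁ - h₂) ^ 2 * (h₁ - h₃) ^ 2) / ((h₃ - h₂) ^ 3 * (h₁ - h₂) ^ 2 * (h₁ - h₃)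 ^ 2) := by
    field_simp
    ring
  have e2 : (-((B 1 2 - B 1 1) + (B 2 2 - B 2 1)) / (h₃ - h₂)) / ((h₁ - h₂) * (h₃ - h₂)) * (rP * (h₁ - h₂ - h₃) - qP * h₁ * h₂ * h₃ + t * h₂ * h₃) = (-((B 1 2 - B 1 1) + (B 2 2 - B 2 1)) * (rP * (h₁ - h₂ - h₃) - qP * h₁ * h₂ * h₃ + t * h₂ * h₃) * (h₃ - h₂) * (h₁ - h₂) * (h₁ - h₃) ^ 2) / ((h₃ - h₂) ^ 3 * (h₁ - h₂) ^ 2 * (h₁ - h₃) ^ 2) := by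
    field_simp
  have e3 : ((h₃ * (B 1 2 - B 1 1) + h₂ * (B 2 2 - B 2 1)) / (h₃ - h₂)) / ((h₁ - h₂) * (h₃ - h₂)) * (qP * (h₂ * h₃ - h₁ * h₂ - h₁ * h₃) - rP + t * h₁) = ((h₃ * (B 1 2 - B 1 1) + h₂ * (B 2 2 - B 2 1)) * (qP * (h₂ * h₃ - h₁ * h₂ - h₁ * h₃) - rP + t * h₁) * (h₃ - h₂) * (h₁ - h₂) * (h₁ - h₃) ^ 2) / ((h₃ - h₂) ^ 3 * (h₁ - h₂) ^ 2 * (h₁ - h₃) ^ 2) := by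
    field_simp
  have e4 : (rMi - qMi * h₃) / (h₃ - h₂) = ((rMi - qMi * h₃) * (h₃ - h₂) ^ 2 * (h₁ - h₂) ^ 2 * (h₁ - h₃) ^ 2) / ((h₃ - h₂) ^ 3 * (h₁ - h₂) ^ 2 * (h₁ - h₃) ^ 2) := by
    field_simp
  have e5 : (qP * h₃ ^ 2 - t * h₃ + rP) * (qP * h₁ ^ 2 - t * h₁ + rP) / ((h₁ - h₃) ^ 2 * (h₂ - h₁) * (h₃ - h₂)) = (-((qP * h₃ ^ 2 - t * h₃ + rP) * (qP * h₁ ^ 2 - t * h₁ + rP)) * (h₃ - h₂) ^ 2 * (h₁ - h₂)) / ((h₃ - h₂) ^ 3 * (h₁ - h₂) ^ 2 * (h₁ - h₃) ^ 2) := by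
    field_simp
    ring
  rw [e1, e2, e3, e4, e5, ← add_div, ← add_div, ← add_div,
    ← add_div, eq_div_iff hD0]
  subst hqP hqMi hrP hrMi ht
  rw [hu12, hu13]
  generalize B 0 0 = a
  generalize B 1 0 = b
  generalize B 1 1 = c
  generalize B 1 2 = d
  generalize B 2 0 = e
  generalize B 2 1 = f
  generalize B 2 2 = g
  ring
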